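/- Let γ_Z = Σ_{l=1}^n b_l δ_{z_l} be a fixed discrete probability measure on ℝ^d with distinct points and positive weights. Let P_1,…,P_p be random matrices P_i ∈ ℝ^{d_i × d} whose rows are i.i.d. samples from a law ℙ on ℝ^d giving mass zero to every hyperplane. If Σ_{i=1}^p d_i > d, then ℙ-almost surely the only probability measure γ on ℝ^d satisfying P_i#γ = P_i#γ_Z for all i ∈ {1,…,p} is γ = γ_Z. -/

import Mathlib

open MeasureTheory Matrix

section Aux

variable {d : ℕ} {μ : Measure (Fin d → ℝ)}

/-- dot product with `w` as a linear map -/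
private def dotL (w : Fin d → ℝ) : (Fin d → ℝ) →ₗ[ℝ] ℝ where
  toFun v := v ⬝ᵥ w
  map_add' x y := add_dotProduct x y w
  map_smul' c x := smul_dotProduct c x w

private lemma ker_dot_null
    (hμ : ∀ H : Submodule ℝ (Fin d → ℝ), Module.finrank ℝ H = d - 1 → μ (H : Set (Fin d → ℝ)) = 0)
    {w : Fin d → ℝ} (hw : w ≠ 0) : μ {v | v ⬝ᵥ w = 0} = 0 := by
  have hww : w ⬝ᵥ w ≠ 0 := fun h => hw (dotProduct_self_eq_zero.mp h)
  have hrange : LinearMap.range (dotL w) = ⊤ := by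
    rw [LinearMap.range_eq_top]
    intro c
    exact ⟨((w ⬝ᵥ w)⁻¹ * c) • w, by
      show (((w ⬝ᵥ w)⁻¹ * c) • w) ⬝ᵥ w = c
      rw [smul_dotProduct, smul_eq_mul]
      field_simp⟩
  have h1 := LinearMap.finrank_range_add_finrank_ker (dotL w)
  rw [hrange, finrank_top, Module.finrank_self, Module.finrank_fintype_fun_eq_card,
    Fintype.card_fin] at h1
  have hK : Module.finrank ℝ (LinearMap.ker (dotL w)) = d - 1 := by omega
  have : {v | v ⬝ᵥ w = 0} = (LinearMap.ker (dotL w) : Set (Fin d → ℝ)) := by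
    ext v; simp [LinearMap.mem_ker, dotL]
  rw [this]
  exact hμ _ hK

private lemma submodule_null
    (hμ : ∀ H : Submodule ℝ (Fin d → ℝ), Module.finrank ℝ H = d - 1 → μ (H : Set (Fin d → ℝ)) = 0)
    {W : Submodule ℝ (Fin d → ℝ)} (hW : W ≠ ⊤) : μ (W : Set (Fin d → ℝ)) = 0 := by
  obtain ⟨f, hf0, hfW⟩ := W.exists_dual_map_eq_bot_of_lt_top (lt_top_iff_ne_top.mpr hW)
    inferInstance
  set w : Fin d → ℝ := fun j => f (Pi.single j 1) with hwdef
  have hfx : ∀ x : Fin d → ℝ, f x = x ⬝ᵥ w := by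
    intro x
    have step : ∀ j : Fin d, f (Pi.single j (x j)) = x j * w j := by
      intro j
      have : Pi.single j (x j) = (x j) • (Pi.single j (1 : ℝ) : Fin d → ℝ) := by
        funext k
        by_cases h : k = j
        · subst h; simp
        · simp [Pi.single_apply, h]
      rw [this, _root_.map_smul, smul_eq_mul]
    calc f x = f (∑ j, Pi.single j (x j)) := by rw [Finset.univ_sum_single]
      _ = ∑ j, f (Pi.single j (x j)) := map_sum f _ _
      _ = ∑ j, x j * w j := Finset.sum_congr rfl fun j _ => step j
      _ = x ⬝ᵥ w := rfl
  have hwne : w ≠ 0 := by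
    intro h
    apply hf0
    apply LinearMap.ext
    intro x
    rw [hfx x, h]
    simp
  have hsub : (W : Set (Fin d → ℝ)) ⊆ {v | v ⬝ᵥ w = 0} := by
    intro x hx
    have : f x ∈ W.map f := Submodule.mem_map_of_mem hx
    rw [hfW] at this
    simpa [hfx x] using this
  exact measure_mono_null hsub (ker_dot_null hμ hwne)

end Aux

section Fubini

private lemma pi1_null {ι : Type*} [Fintype ι] [DecidableEq ι] {α : ι → Type*}
    [∀ i, MeasurableSpace (α i)] (μs : ∀ i, Measure (α i)) [∀ i, IsProbabilityMeasure (μs i)]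
    (k₀ : ι) [Nonempty (α k₀)] (B : Set (∀ i, α i)) (hB : MeasurableSet B)
    (h : ∀ f : ∀ i, α i, μs k₀ {v | Function.update f k₀ v ∈ B} = 0) :
    Measure.pi μs B = 0 := by
  classical
  letI : Unique {i // ¬ i ≠ k₀} :=
    ⟨⟨⟨k₀, by simp⟩⟩, fun i => Subtype.ext (not_not.mp i.2)⟩
  set E := MeasurableEquiv.piEquivPiSubtypeProd α (fun i => i ≠ k₀) with hEdef
  have hE := measurePreserving_piEquivPiSubtypeProd μs (fun i => i ≠ k₀)
  set pu := MeasurableEquiv.piUnique (fun i : {i // ¬ i ≠ k₀} => α i) with hpudef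
  have hpu := measurePreserving_piUnique (fun i : {i // ¬ i ≠ k₀} => μs i)
  have hBsymm : MeasurableSet (E.symm ⁻¹' B) := E.symm.measurable hB
  have key : Measure.pi μs B = ((Measure.pi fun i : {i // i ≠ k₀} => μs i).prod
      (Measure.pi fun i : {i // ¬ i ≠ k₀} => μs i)) (E.symm ⁻¹' B) := by
    have hBB : B = E ⁻¹' (E.symm ⁻¹' B) := by
      ext x; simp
    conv_lhs => rw [hBB]
    exact hE.measure_preimage hBsymm.nullMeasurableSet
  rw [key, Measure.measure_prod_null hBsymm]
  refine Filter.Eventually.of_forall (fun x => ?_)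
  show (Measure.pi (fun (i : {i // ¬ i ≠ k₀}) => μs i)) (Prod.mk x ⁻¹' (E.symm ⁻¹' B)) = 0
  have hslice : MeasurableSet (Prod.mk x ⁻¹' (E.symm ⁻¹' B)) :=
    measurable_prodMk_left hBsymm
  have hmeas2 : MeasurableSet {v : α k₀ | E.symm (x, pu.symm v) ∈ B} :=
    pu.symm.measurable hslice
  have key2 : (Measure.pi fun i : {i // ¬ i ≠ k₀} => μs i) (Prod.mk x ⁻¹' (E.symm ⁻¹' B))
      = μs k₀ {v : α k₀ | E.symm (x, pu.symm v) ∈ B} := by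
    have hCC : (Prod.mk x ⁻¹' (E.symm ⁻¹' B))
        = pu ⁻¹' {v : α k₀ | E.symm (x, pu.symm v) ∈ B} := by
      ext y
      show E.symm (x, y) ∈ B ↔ E.symm (x, pu.symm (pu y)) ∈ B
      rw [MeasurableEquiv.symm_apply_apply]
    conv_lhs => rw [hCC]
    exact hpu.measure_preimage hmeas2.nullMeasurableSet
  rw [key2]
  obtain ⟨v₀⟩ := ‹Nonempty (α k₀)›
  have hrepr : ∀ v : α k₀, E.symm (x, pu.symm v) = Function.update (E.symm (x, pu.symm v₀)) k₀ v := by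
    intro v
    funext i
    show (Equiv.piEquivPiSubtypeProd (fun i => i ≠ k₀) α).symm (x, pu.symm v) i = _
    by_cases hi : i = k₀
    · subst i
      rw [Function.update_self]
      simp only [Equiv.piEquivPiSubtypeProd_symm_apply]
      rw [dif_neg (by simp)]
      exact uniqueElim_default (α := fun i : {i // ¬ i ≠ k₀} => α i) v
    · rw [Function.update_of_ne hi]
      show _ = (Equiv.piEquivPiSubtypeProd (fun i => i ≠ k₀) α).symm (x, pu.symm v₀) i
      simp only [Equiv.piEquivPiSubtypeProd_symm_apply]
      rw [dif_pos hi, dif_pos hi]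
  have : {v : α k₀ | E.symm (x, pu.symm v) ∈ B}
      = {v | Function.update (E.symm (x, pu.symm v₀)) k₀ v ∈ B} := by
    ext v
    simp only [Set.mem_setOf_eq]
    rw [← hrepr v]
  rw [this]
  exact h _

end Fubini

section Transfer

variable {d p : ℕ} {di : Fin p → ℕ}

private def rowsMap (U : ∀ i : Fin p, Fin (di i) → (Fin d → ℝ)) :
    ((i : Fin p) × Fin (di i)) → (Fin d → ℝ) := fun k => U k.1 k.2

private lemma rowsMap_measurable :
    Measurable (rowsMap (d := d) (p := p) (di := di)) :=
  measurable_pi_lambda _ fun k => (measurable_pi_apply k.2).comp (measurable_pi_apply k.1)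

private lemma rowsMap_update (U : ∀ i : Fin p, Fin (di i) → (Fin d → ℝ))
    (i₀ : Fin p) (j₀ : Fin (di i₀)) (v : Fin d → ℝ) :
    rowsMap (Function.update U i₀ (Function.update (U i₀) j₀ v))
      = Function.update (rowsMap U) ⟨i₀, j₀⟩ v := by
  funext k
  rcases k with ⟨i, j⟩
  by_cases hi : i = i₀
  · subst hi
    show (Function.update U i (Function.update (U i) j₀ v)) i j = _
    rw [Function.update_self]
    by_cases hj : j = j₀
    · subst hj
      rw [Function.update_self]
      exact (Function.update_self (⟨i, j⟩ : (i : Fin p) × Fin (di i)) v (rowsMap U)).symm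
    · rw [Function.update_of_ne hj]
      have hne : (⟨i, j⟩ : (i : Fin p) × Fin (di i)) ≠ ⟨i, j₀⟩ := by
        simp [Sigma.mk.inj_iff, hj]
      rw [Function.update_of_ne hne]
      rfl
  · show (Function.update U i₀ (Function.update (U i₀) j₀ v)) i j = _
    rw [Function.update_of_ne hi]
    have hne : (⟨i, j⟩ : (i : Fin p) × Fin (di i)) ≠ ⟨i₀, j₀⟩ := by
      simp [Sigma.mk.inj_iff, hi]
    rw [Function.update_of_ne hne]
    rfl

private lemma pi2_null (μ : Measure (Fin d → ℝ)) [IsProbabilityMeasure μ]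
    (k₀ : (i : Fin p) × Fin (di i)) (A : Set (((i : Fin p) × Fin (di i)) → (Fin d → ℝ)))
    (hA : MeasurableSet A)
    (h : ∀ u, μ {v | Function.update u k₀ v ∈ A} = 0) :
    (Measure.pi fun i : Fin p => Measure.pi fun _ : Fin (di i) => μ) (rowsMap ⁻¹' A) = 0 := by
  rcases k₀ with ⟨i₀, j₀⟩
  apply pi1_null _ i₀ _ (rowsMap_measurable hA)
  intro U
  have hmeas : MeasurableSet {g : Fin (di i₀) → (Fin d → ℝ) |
      Function.update U i₀ g ∈ rowsMap ⁻¹' A} :=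
    (rowsMap_measurable.comp (measurable_update U)) hA
  apply pi1_null _ j₀ _ hmeas
  intro g
  have key : ∀ v, Function.update U i₀ (Function.update g j₀ v)
      = Function.update (Function.update U i₀ g) i₀
        (Function.update ((Function.update U i₀ g) i₀) j₀ v) := by
    intro v
    rw [Function.update_self, Function.update_idem]
  have : {v | Function.update g j₀ v ∈ {g | Function.update U i₀ g ∈ rowsMap ⁻¹' A}}
      = {v | Function.update (rowsMap (Function.update U i₀ g)) ⟨i₀, j₀⟩ v ∈ A} := by
    ext v
    simp only [Set.mem_setOf_eq, Set.mem_preimage]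
    rw [key v, rowsMap_update]
  rw [this]
  exact h _

end Transfer

section Gram

private lemma gram_det_ne_iff {d m : ℕ} (f : Fin m → (Fin d → ℝ)) :
    (Matrix.of fun a b : Fin m => f a ⬝ᵥ f b).det ≠ 0 ↔ LinearIndependent ℝ f := by
  set M : Matrix (Fin m) (Fin d) ℝ := Matrix.of fun a l => f a l with hM
  have hG : (Matrix.of fun a b : Fin m => f a ⬝ᵥ f b) = M * Mᵀ := by
    ext a b
    simp [Matrix.mul_apply, dotProduct, hM]
  have hvm : ∀ g : Fin m → ℝ, g ᵥ* M = ∑ a, g a • f a := by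
    intro g
    funext l
    simp [Matrix.vecMul, dotProduct, Finset.sum_apply, hM]
  constructor
  · intro hdet
    rw [Fintype.linearIndependent_iff]
    intro g hg a
    have hunit : IsUnit (M * Mᵀ) := by
      rw [Matrix.isUnit_iff_isUnit_det, isUnit_iff_ne_zero]
      rwa [hG] at hdet
    have hinj := Matrix.vecMul_injective_iff_isUnit.mpr hunit
    have hg0 : g ᵥ* (M * Mᵀ) = 0 ᵥ* (M * Mᵀ) := by
      rw [← Matrix.vecMul_vecMul, hvm, hg, Matrix.zero_vecMul, Matrix.zero_vecMul]
    have := hinj hg0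
    rw [this]
    rfl
  · intro hLI
    rw [hG]
    rw [← isUnit_iff_ne_zero, ← Matrix.isUnit_iff_isUnit_det]
    rw [← Matrix.vecMul_injective_iff_isUnit]
    intro g1 g2 hgg
    simp only at hgg
    have he : (g1 - g2) ᵥ* (M * Mᵀ) = 0 := by
      rw [Matrix.sub_vecMul, hgg, sub_self]
    set e := g1 - g2 with hedef
    have hmv : (M * Mᵀ) *ᵥ e = 0 := by
      have : (M * Mᵀ)ᵀ = M * Mᵀ := by
        rw [Matrix.transpose_mul, Matrix.transpose_transpose]
      calc (M * Mᵀ) *ᵥ e = (M * Mᵀ)ᵀ *ᵥ e := by rw [this]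
        _ = e ᵥ* (M * Mᵀ) := Matrix.mulVec_transpose _ _
        _ = 0 := he
    have hy : Mᵀ *ᵥ e = 0 := by
      have h0 : e ⬝ᵥ ((M * Mᵀ) *ᵥ e) = 0 := by rw [hmv, dotProduct_zero]
      rw [← Matrix.mulVec_mulVec, Matrix.dotProduct_mulVec] at h0
      rw [Matrix.mulVec_transpose]
      rw [Matrix.mulVec_transpose] at h0
      exact dotProduct_self_eq_zero.mp h0
    have hvm0 : e ᵥ* M = 0 := by
      rw [← Matrix.mulVec_transpose]
      exact hy
    have he0 : e = 0 := by
      have hsum : ∑ a, e a • f a = 0 := by rw [← hvm, hvm0]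
      funext a
      exact Fintype.linearIndependent_iff.mp hLI e hsum a
    have : g1 - g2 = 0 := he0
    exact sub_eq_zero.mp this

end Gram
section Events

variable {d p : ℕ} {di : Fin p → ℕ}

private lemma bad_meas {m : ℕ} (c : Fin m → ((i : Fin p) × Fin (di i))) :
    MeasurableSet {u : ((i : Fin p) × Fin (di i)) → (Fin d → ℝ) |
      ¬ LinearIndependent ℝ (fun a => u (c a))} := by
  have hset : {u : ((i : Fin p) × Fin (di i)) → (Fin d → ℝ) |
        ¬ LinearIndependent ℝ (fun a => u (c a))}
      = (fun u : ((i : Fin p) × Fin (di i)) → (Fin d → ℝ) =>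
          (Matrix.of fun a b : Fin m => u (c a) ⬝ᵥ u (c b)).det) ⁻¹' {0} := by
    ext u
    simp only [Set.mem_setOf_eq, Set.mem_preimage, Set.mem_singleton_iff]
    rw [← gram_det_ne_iff (fun a => u (c a)), not_not]
  rw [hset]
  have hcont : Continuous fun u : ((i : Fin p) × Fin (di i)) → (Fin d → ℝ) =>
      (Matrix.of fun a b : Fin m => u (c a) ⬝ᵥ u (c b)).det := by
    apply Continuous.matrix_det
    apply continuous_matrix
    intro a b
    show Continuous fun u : ((i : Fin p) × Fin (di i)) → (Fin d → ℝ) =>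
      ∑ l, u (c a) l * u (c b) l
    exact continuous_finset_sum _ fun l _ => by fun_prop
  exact hcont.measurable (measurableSet_singleton 0)

private lemma indep_rows_null (μ : Measure (Fin d → ℝ)) [IsProbabilityMeasure μ]
    (hμ : ∀ H : Submodule ℝ (Fin d → ℝ), Module.finrank ℝ H = d - 1 → μ (H : Set (Fin d → ℝ)) = 0) :
    ∀ m, m ≤ d → ∀ c : Fin m → ((i : Fin p) × Fin (di i)), Function.Injective c →
    (Measure.pi fun i : Fin p => Measure.pi fun _ : Fin (di i) => μ)
      (rowsMap ⁻¹' {u | ¬ LinearIndependent ℝ (fun a => u (c a))}) = 0 := by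
  intro m
  induction m with
  | zero =>
    intro _ c _
    have : {u : ((i : Fin p) × Fin (di i)) → (Fin d → ℝ) |
        ¬ LinearIndependent ℝ (fun a => u (c a))} = ∅ := by
      ext u
      simp [linearIndependent_empty_type]
    rw [this]
    simp
  | succ m IH =>
    intro hm c hc
    set cp : Fin m → ((i : Fin p) × Fin (di i)) := c ∘ Fin.castSucc with hcp
    have hcpinj : Function.Injective cp := hc.comp (Fin.castSucc_injective m)
    have hcpne : ∀ a : Fin m, cp a ≠ c (Fin.last m) :=
      fun a h => (Fin.castSucc_lt_last a).ne (hc h)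
    set A : Set (((i : Fin p) × Fin (di i)) → (Fin d → ℝ)) :=
      {u | ¬ LinearIndependent ℝ (fun a => u (c a))} with hA
    set Ap : Set (((i : Fin p) × Fin (di i)) → (Fin d → ℝ)) :=
      {u | ¬ LinearIndependent ℝ (fun a => u (cp a))} with hAp
    have hsub : rowsMap ⁻¹' A ⊆ (rowsMap ⁻¹' Ap) ∪ (rowsMap ⁻¹' (A \ Ap)) := by
      intro U hU
      by_cases h : rowsMap U ∈ Ap
      · exact Or.inl h
      · exact Or.inr ⟨hU, h⟩
    refine measure_mono_null hsub (measure_union_null (IH (Nat.le_of_succ_le hm) cp hcpinj) ?_)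
    apply pi2_null μ (c (Fin.last m)) (A \ Ap) ((bad_meas c).diff (bad_meas cp))
    intro u
    by_cases hu : LinearIndependent ℝ (fun a => u (cp a))
    · -- slice contained in span, which is null
      refine measure_mono_null ?_
        (submodule_null hμ (W := Submodule.span ℝ (Set.range fun a => u (cp a))) ?_)
      · intro v hv
        obtain ⟨h1, -⟩ := hv
        have hfam : (fun a : Fin (m+1) => Function.update u (c (Fin.last m)) v (c a))
            = Fin.snoc (fun a : Fin m => u (cp a)) v := by
          funext a
          refine Fin.lastCases ?_ ?_ a
          · rw [Fin.snoc_last, Function.update_self]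
          · intro a'
            rw [Fin.snoc_castSucc]
            exact Function.update_of_ne (hcpne a') _ _
        have h1' : ¬ LinearIndependent ℝ (Fin.snoc (fun a : Fin m => u (cp a)) v) := by
          rw [← hfam]
          exact h1
        by_contra hvn
        exact h1' (linearIndependent_fin_snoc.mpr ⟨hu, hvn⟩)
      · intro htop
        have h1' := finrank_span_eq_card hu
        rw [htop, finrank_top, Module.finrank_fintype_fun_eq_card] at h1'
        simp only [Fintype.card_fin] at h1'
        omega
    · have : {v | Function.update u (c (Fin.last m)) v ∈ A \ Ap} = ∅ := by
        ext v
        simp only [Set.mem_setOf_eq, Set.mem_diff, Set.mem_empty_iff_false, iff_false, not_and,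
          not_not]
        intro _
        show ¬ LinearIndependent ℝ (fun a => Function.update u (c (Fin.last m)) v (cp a))
        have hfam : (fun a : Fin m => Function.update u (c (Fin.last m)) v (cp a))
            = fun a => u (cp a) := by
          funext a
          exact Function.update_of_ne (hcpne a) _ _
        rw [hfam]
        exact hu
      rw [this]
      exact measure_empty

private lemma dot_row_meas (k : (i : Fin p) × Fin (di i)) (w : Fin d → ℝ) :
    MeasurableSet {u : ((i : Fin p) × Fin (di i)) → (Fin d → ℝ) | u k ⬝ᵥ w = 0} := by
  have hcont : Continuous fun u : ((i : Fin p) × Fin (di i)) → (Fin d → ℝ) => u k ⬝ᵥ w := by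
    show Continuous fun u : ((i : Fin p) × Fin (di i)) → (Fin d → ℝ) => ∑ l, u k l * w l
    exact continuous_finset_sum _ fun l _ => by fun_prop
  exact hcont.measurable (measurableSet_singleton 0)

private lemma sep_null (μ : Measure (Fin d → ℝ)) [IsProbabilityMeasure μ]
    (hμ : ∀ H : Submodule ℝ (Fin d → ℝ), Module.finrank ℝ H = d - 1 → μ (H : Set (Fin d → ℝ)) = 0)
    (k : (i : Fin p) × Fin (di i)) {w : Fin d → ℝ} (hw : w ≠ 0) :
    (Measure.pi fun i : Fin p => Measure.pi fun _ : Fin (di i) => μ)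
      (rowsMap ⁻¹' {u | u k ⬝ᵥ w = 0}) = 0 := by
  apply pi2_null μ k _ (dot_row_meas k w)
  intro u
  have : {v | Function.update u k v ∈ {u : ((i : Fin p) × Fin (di i)) → (Fin d → ℝ) | u k ⬝ᵥ w = 0}}
      = {v | v ⬝ᵥ w = 0} := by
    ext v
    simp [Function.update_self]
  rw [this]
  exact ker_dot_null hμ hw

private def rowMat (u : ((i : Fin p) × Fin (di i)) → (Fin d → ℝ))
    (c : Fin d → ((i : Fin p) × Fin (di i))) : Matrix (Fin d) (Fin d) ℝ :=
  Matrix.of fun j l => u (c j) l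

private noncomputable def solX (u : ((i : Fin p) × Fin (di i)) → (Fin d → ℝ))
    (c : Fin d → ((i : Fin p) × Fin (di i)))
    (t : ((i : Fin p) × Fin (di i)) → (Fin d → ℝ)) : Fin d → ℝ :=
  (rowMat u c)⁻¹ *ᵥ (fun j => u (c j) ⬝ᵥ t (c j))

private lemma solX_meas (c : Fin d → ((i : Fin p) × Fin (di i)))
    (t : ((i : Fin p) × Fin (di i)) → (Fin d → ℝ)) :
    Measurable fun u : ((i : Fin p) × Fin (di i)) → (Fin d → ℝ) => solX u c t := by
  have hMcont : Continuous fun u : ((i : Fin p) × Fin (di i)) → (Fin d → ℝ) => rowMat u c :=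
    continuous_matrix fun j l => (continuous_apply l).comp (continuous_apply (c j))
  have hdet : Measurable fun u : ((i : Fin p) × Fin (di i)) → (Fin d → ℝ) =>
      Ring.inverse (rowMat u c).det := by
    rw [Ring.inverse_eq_inv']
    exact measurable_inv.comp hMcont.matrix_det.measurable
  have hcv : ∀ l, Continuous fun u : ((i : Fin p) × Fin (di i)) → (Fin d → ℝ) =>
      u (c l) ⬝ᵥ t (c l) := by
    intro l
    show Continuous fun u : ((i : Fin p) × Fin (di i)) → (Fin d → ℝ) =>
      ∑ l', u (c l) l' * t (c l) l'
    exact continuous_finset_sum _ fun l' _ => by fun_prop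
  apply measurable_pi_lambda
  intro j'
  have heq : (fun u : ((i : Fin p) × Fin (di i)) → (Fin d → ℝ) => solX u c t j')
      = fun u => Ring.inverse (rowMat u c).det *
          (((rowMat u c).adjugate *ᵥ (fun j => u (c j) ⬝ᵥ t (c j))) j') := by
    funext u
    show ((rowMat u c)⁻¹ *ᵥ (fun j => u (c j) ⬝ᵥ t (c j))) j' = _
    rw [Matrix.inv_def, Matrix.smul_mulVec]
    rfl
  rw [heq]
  apply hdet.mul
  show Measurable fun u : ((i : Fin p) × Fin (di i)) → (Fin d → ℝ) =>
    ∑ l, (rowMat u c).adjugate j' l * (u (c l) ⬝ᵥ t (c l))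
  apply Finset.measurable_sum
  intro l _
  exact (((continuous_apply l).comp ((continuous_apply j').comp
    hMcont.matrix_adjugate)).mul (hcv l)).measurable

private lemma exc_meas (c : Fin d → ((i : Fin p) × Fin (di i)))
    (a : (i : Fin p) × Fin (di i)) (t : ((i : Fin p) × Fin (di i)) → (Fin d → ℝ)) :
    MeasurableSet {u : ((i : Fin p) × Fin (di i)) → (Fin d → ℝ) |
      solX u c t ≠ t a ∧ u a ⬝ᵥ (solX u c t - t a) = 0} := by
  have hmeas1 : MeasurableSet {u : ((i : Fin p) × Fin (di i)) → (Fin d → ℝ) |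
      solX u c t ≠ t a} :=
    ((solX_meas c t) (measurableSet_singleton (t a))).compl
  have hmeas2 : MeasurableSet {u : ((i : Fin p) × Fin (di i)) → (Fin d → ℝ) |
      u a ⬝ᵥ (solX u c t - t a) = 0} := by
    have hm : Measurable fun u : ((i : Fin p) × Fin (di i)) → (Fin d → ℝ) =>
        u a ⬝ᵥ (solX u c t - t a) := by
      show Measurable fun u : ((i : Fin p) × Fin (di i)) → (Fin d → ℝ) =>
        ∑ l, u a l * (solX u c t - t a) l
      apply Finset.measurable_sum
      intro l _
      apply Measurable.mul
      · show Measurable fun u : ((i : Fin p) × Fin (di i)) → (Fin d → ℝ) => u a l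
        exact ((continuous_apply (A := fun _ : Fin d => ℝ) l).comp
          (continuous_apply a)).measurable
      · have : Measurable fun u : ((i : Fin p) × Fin (di i)) → (Fin d → ℝ) => solX u c t l :=
          measurable_pi_iff.mp (solX_meas c t) l
        exact this.sub measurable_const
    exact hm (measurableSet_singleton 0)
  have hmeasA : MeasurableSet {u : ((i : Fin p) × Fin (di i)) → (Fin d → ℝ) |
      solX u c t ≠ t a ∧ u a ⬝ᵥ (solX u c t - t a) = 0} := by
    rw [Set.setOf_and]
    exact hmeas1.inter hmeas2
  exact hmeasA

private lemma exc_null (μ : Measure (Fin d → ℝ)) [IsProbabilityMeasure μ]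
    (hμ : ∀ H : Submodule ℝ (Fin d → ℝ), Module.finrank ℝ H = d - 1 → μ (H : Set (Fin d → ℝ)) = 0)
    (a : (i : Fin p) × Fin (di i)) (c : Fin d → ((i : Fin p) × Fin (di i)))
    (hcne : ∀ j, c j ≠ a) (t : ((i : Fin p) × Fin (di i)) → (Fin d → ℝ)) :
    (Measure.pi fun i : Fin p => Measure.pi fun _ : Fin (di i) => μ)
      (rowsMap ⁻¹' {u | solX u c t ≠ t a ∧ u a ⬝ᵥ (solX u c t - t a) = 0}) = 0 := by
  apply pi2_null μ a _ (exc_meas c a t)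
  intro u
  have hXeq : ∀ v, solX (Function.update u a v) c t = solX u c t := by
    intro v
    have hMeq : rowMat (Function.update u a v) c = rowMat u c := by
      ext j l
      show Function.update u a v (c j) l = u (c j) l
      rw [Function.update_of_ne (hcne j)]
    have hcveq : (fun j => Function.update u a v (c j) ⬝ᵥ t (c j))
        = fun j => u (c j) ⬝ᵥ t (c j) := by
      funext j
      rw [Function.update_of_ne (hcne j)]
    show (rowMat (Function.update u a v) c)⁻¹ *ᵥ _ = _
    rw [hMeq, hcveq]
    rfl
  by_cases hX : solX u c t = t a
  · have : {v | Function.update u a v ∈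
        {u | solX u c t ≠ t a ∧ u a ⬝ᵥ (solX u c t - t a) = 0}} = ∅ := by
      ext v
      simp only [Set.mem_setOf_eq, Set.mem_empty_iff_false, iff_false, not_and]
      intro h1
      exact (h1 ((hXeq v).trans hX)).elim
    rw [this]
    exact measure_empty
  · refine measure_mono_null ?_ (ker_dot_null hμ (sub_ne_zero.mpr hX))
    intro v hv
    obtain ⟨-, h2⟩ := hv
    show v ⬝ᵥ (solX u c t - t a) = 0
    have h2' : Function.update u a v a ⬝ᵥ (solX (Function.update u a v) c t - t a) = 0 := h2
    rw [hXeq v, Function.update_self] at h2'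
    exact h2'

end Events

section Main

/-- Almost-sure unicity in the reconstruction problem: if the rows of the random matrices
`P_i ∈ ℝ^{d_i × d}` are i.i.d. of a law `ℙ` giving zero mass to hyperplanes and
`Σ_i d_i > d`, then `ℙ`-almost surely the only probability measure `γ` with
`P_i#γ = P_i#γ_Z` for all `i` is `γ = γ_Z`. -/
theorem ae_unique_reconstruction
    (d n p : ℕ) (di : Fin p → ℕ) (hD : ∑ i, di i > d)
    (μ : Measure (Fin d → ℝ)) [IsProbabilityMeasure μ]
    (hμ : ∀ H : Submodule ℝ (Fin d → ℝ), Module.finrank ℝ H = d - 1 → μ (H : Set (Fin d → ℝ)) = 0)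
    (z : Fin n → (Fin d → ℝ)) (hz : Function.Injective z)
    (b : Fin n → ℝ) (hb : ∀ l, 0 < b l) (hsum : ∑ l, b l = 1)
    (γZ : Measure (Fin d → ℝ))
    (hγZ : γZ = ∑ l, ENNReal.ofReal (b l) • Measure.dirac (z l)) :
    (Measure.pi fun i : Fin p => Measure.pi fun _ : Fin (di i) => μ)
      {U : ∀ i : Fin p, Fin (di i) → (Fin d → ℝ) |
        ∀ γ : Measure (Fin d → ℝ), IsProbabilityMeasure γ →
          (∀ i, γ.map (Matrix.of (U i)).mulVec = γZ.map (Matrix.of (U i)).mulVec) →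
          γ = γZ} = 1 := by
  classical
  set Pi2 := (Measure.pi fun i : Fin p => Measure.pi fun _ : Fin (di i) => μ) with hPi2
  have hcard : d + 1 ≤ Fintype.card ((i : Fin p) × Fin (di i)) := by
    rw [Fintype.card_sigma]
    simpa using hD
  have hιne : Nonempty ((i : Fin p) × Fin (di i)) := by
    rw [← Fintype.card_pos_iff]
    omega
  obtain ⟨a₀⟩ := hιne
  have hchoice : ∀ a : (i : Fin p) × Fin (di i), ∃ c : Fin d → ((i : Fin p) × Fin (di i)),
      Function.Injective c ∧ ∀ j, c j ≠ a := by
    intro a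
    have hcard2 : Fintype.card (Fin d) ≤ Fintype.card {k : (i : Fin p) × Fin (di i) // k ≠ a} := by
      have h1 : Fintype.card {k : (i : Fin p) × Fin (di i) // k ≠ a}
          = Fintype.card ((i : Fin p) × Fin (di i))
            - Fintype.card {k : (i : Fin p) × Fin (di i) // k = a} :=
        Fintype.card_subtype_compl _
      rw [Fintype.card_subtype_eq] at h1
      rw [Fintype.card_fin]
      omega
    obtain ⟨f⟩ := Function.Embedding.nonempty_of_card_le hcard2
    exact ⟨fun j => (f j).1, fun j1 j2 h => f.injective (Subtype.ext h), fun j => (f j).2⟩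
  choose ca hca_inj hca_ne using hchoice
  set Bad : Set (∀ i : Fin p, Fin (di i) → (Fin d → ℝ)) :=
    (⋃ a : (i : Fin p) × Fin (di i),
        rowsMap ⁻¹' {u | ¬ LinearIndependent ℝ (fun j => u (ca a j))}) ∪
    ((⋃ k : (i : Fin p) × Fin (di i), ⋃ l : Fin n, ⋃ m : Fin n,
        if l = m then ∅ else rowsMap ⁻¹' {u | u k ⬝ᵥ (z l - z m) = 0}) ∪
    (⋃ σ : Fin p → Fin n, ⋃ a : (i : Fin p) × Fin (di i),
        rowsMap ⁻¹' {u | solX u (ca a) (fun k => z (σ k.1)) ≠ z (σ a.1) ∧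
          u a ⬝ᵥ (solX u (ca a) (fun k => z (σ k.1)) - z (σ a.1)) = 0})) with hBad
  have hBadNull : Pi2 Bad = 0 := by
    refine measure_union_null (measure_iUnion_null fun a => ?_)
      (measure_union_null (measure_iUnion_null fun k => measure_iUnion_null fun l =>
        measure_iUnion_null fun m => ?_) (measure_iUnion_null fun σ =>
        measure_iUnion_null fun a => ?_))
    · exact indep_rows_null μ hμ d le_rfl (ca a) (hca_inj a)
    · by_cases hlm : l = m
      · rw [if_pos hlm]
        exact measure_empty
      · rw [if_neg hlm]
        exact sep_null μ hμ k (sub_ne_zero.mpr fun h => hlm (hz h))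
    · exact exc_null μ hμ a (ca a) (hca_ne a) (fun k => z (σ k.1))
  have hBadMeas : MeasurableSet Bad := by
    refine MeasurableSet.union (MeasurableSet.iUnion fun a => rowsMap_measurable (bad_meas (ca a)))
      (MeasurableSet.union (MeasurableSet.iUnion fun k => MeasurableSet.iUnion fun l =>
        MeasurableSet.iUnion fun m => ?_) (MeasurableSet.iUnion fun σ =>
        MeasurableSet.iUnion fun a => rowsMap_measurable (exc_meas (ca a) a _)))
    by_cases hlm : l = m
    · rw [if_pos hlm]
      exact MeasurableSet.empty
    · rw [if_neg hlm]
      exact rowsMap_measurable (dot_row_meas k _)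
  have hGood1 : Pi2 Badᶜ = 1 := by
    rw [measure_compl hBadMeas (measure_ne_top _ _), hBadNull, measure_univ, tsub_zero]
  have hsub : Badᶜ ⊆ {U : ∀ i : Fin p, Fin (di i) → (Fin d → ℝ) |
      ∀ γ : Measure (Fin d → ℝ), IsProbabilityMeasure γ →
        (∀ i, γ.map (Matrix.of (U i)).mulVec = γZ.map (Matrix.of (U i)).mulVec) →
        γ = γZ} := by
    intro U hU γ hγp hmaps
    haveI := hγp
    rw [Set.mem_compl_iff, hBad] at hU
    rw [Set.mem_union, Set.mem_union] at hU
    push_neg at hU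
    obtain ⟨hU1, hU2, hU3⟩ := hU
    have hG1 : ∀ a, LinearIndependent ℝ (fun j => rowsMap U (ca a j)) := by
      intro a
      by_contra h
      exact hU1 (Set.mem_iUnion.mpr ⟨a, h⟩)
    have hG2 : ∀ (k : (i : Fin p) × Fin (di i)) (l m : Fin n), l ≠ m →
        rowsMap U k ⬝ᵥ (z l - z m) ≠ 0 := by
      intro k l m hlm h
      apply hU2
      refine Set.mem_iUnion.mpr ⟨k, Set.mem_iUnion.mpr ⟨l, Set.mem_iUnion.mpr ⟨m, ?_⟩⟩⟩
      rw [if_neg hlm]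
      exact h
    have hG3 : ∀ (σ : Fin p → Fin n) (a : (i : Fin p) × Fin (di i)),
        ¬(solX (rowsMap U) (ca a) (fun k => z (σ k.1)) ≠ z (σ a.1) ∧
          rowsMap U a ⬝ᵥ (solX (rowsMap U) (ca a) (fun k => z (σ k.1)) - z (σ a.1)) = 0) := by
      intro σ a h
      exact hU3 (Set.mem_iUnion.mpr ⟨σ, Set.mem_iUnion.mpr ⟨a, h⟩⟩)
    have hPmeas : ∀ i : Fin p, Measurable (Matrix.of (U i)).mulVec := by
      intro i
      apply measurable_pi_lambda
      intro j
      show Measurable fun x : Fin d → ℝ => ∑ l, Matrix.of (U i) j l * x l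
      exact Finset.measurable_sum _ fun l _ => measurable_const.mul (measurable_pi_apply l)
    have hrange_meas : MeasurableSet (Set.range z) := (Set.finite_range z).measurableSet
    have hZrange : γZ (Set.range z) = 1 := by
      rw [hγZ, Measure.finset_sum_apply]
      have hterm : ∀ l : Fin n, (ENNReal.ofReal (b l) • Measure.dirac (z l)) (Set.range z)
          = ENNReal.ofReal (b l) := by
        intro l
        rw [Measure.smul_apply, Measure.dirac_apply' _ hrange_meas,
          Set.indicator_of_mem (Set.mem_range_self l), Pi.one_apply, smul_eq_mul, mul_one]
      rw [Finset.sum_congr rfl fun l _ => hterm l,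
        ← ENNReal.ofReal_sum_of_nonneg fun l _ => (hb l).le, hsum, ENNReal.ofReal_one]
    have hZuniv : γZ Set.univ = 1 := by
      rw [hγZ, Measure.finset_sum_apply]
      have hterm : ∀ l : Fin n, (ENNReal.ofReal (b l) • Measure.dirac (z l)) Set.univ
          = ENNReal.ofReal (b l) := by
        intro l
        rw [Measure.smul_apply, measure_univ, smul_eq_mul, mul_one]
      rw [Finset.sum_congr rfl fun l _ => hterm l,
        ← ENNReal.ofReal_sum_of_nonneg fun l _ => (hb l).le, hsum, ENNReal.ofReal_one]
    haveI : IsProbabilityMeasure γZ := ⟨hZuniv⟩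
    have hpre : ∀ i : Fin p, γ ((Matrix.of (U i)).mulVec ⁻¹'
        ((Matrix.of (U i)).mulVec '' Set.range z)) = 1 := by
      intro i
      have hS : MeasurableSet ((Matrix.of (U i)).mulVec '' Set.range z) :=
        ((Set.finite_range z).image _).measurableSet
      have h1 : γ ((Matrix.of (U i)).mulVec ⁻¹' ((Matrix.of (U i)).mulVec '' Set.range z))
          = γZ ((Matrix.of (U i)).mulVec ⁻¹' ((Matrix.of (U i)).mulVec '' Set.range z)) := by
        rw [← Measure.map_apply (hPmeas i) hS, ← Measure.map_apply (hPmeas i) hS, hmaps i]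
      rw [h1]
      refine le_antisymm prob_le_one ?_
      calc (1 : ENNReal) = γZ (Set.range z) := hZrange.symm
        _ ≤ _ := measure_mono (Set.subset_preimage_image _ _)
    set T : Set (Fin d → ℝ) := ⋂ i : Fin p, (Matrix.of (U i)).mulVec ⁻¹'
        ((Matrix.of (U i)).mulVec '' Set.range z) with hT
    have hTmeas : MeasurableSet T := MeasurableSet.iInter fun i =>
      (hPmeas i) ((Set.finite_range z).image _).measurableSet
    have hTfull : γ T = 1 := by
      have hc : γ Tᶜ = 0 := by
        rw [hT, Set.compl_iInter]
        refine measure_iUnion_null fun i => ?_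
        have hmeas_i : MeasurableSet ((Matrix.of (U i)).mulVec ⁻¹'
            ((Matrix.of (U i)).mulVec '' Set.range z)) :=
          (hPmeas i) ((Set.finite_range z).image _).measurableSet
        rw [measure_compl hmeas_i (measure_ne_top _ _), hpre i, measure_univ, tsub_self]
      have h2 := measure_compl hTmeas (measure_ne_top γ T)
      rw [hc, measure_univ, eq_comm, tsub_eq_zero_iff_le] at h2
      exact le_antisymm prob_le_one h2
    have hTsub : T ⊆ Set.range z := by
      intro x hx
      have hex : ∀ i : Fin p, ∃ l : Fin n,
          (Matrix.of (U i)).mulVec (z l) = (Matrix.of (U i)).mulVec x := by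
        intro i
        have hxi := Set.mem_iInter.mp hx i
        obtain ⟨v, hv, heq⟩ := hxi
        obtain ⟨l, rfl⟩ := hv
        exact ⟨l, heq⟩
      choose σ hσ using hex
      have hrow : ∀ k : (i : Fin p) × Fin (di i),
          rowsMap U k ⬝ᵥ (x - z (σ k.1)) = 0 := by
        intro k
        have h2 := congrFun (hσ k.1) k.2
        rw [dotProduct_sub, sub_eq_zero]
        exact h2.symm
      have hxa : ∀ a : (i : Fin p) × Fin (di i), x = z (σ a.1) := by
        intro a
        have hLI := hG1 a
        have hunit : IsUnit (rowMat (rowsMap U) (ca a)) := by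
          rw [← Matrix.linearIndependent_rows_iff_isUnit]
          exact hLI
        have hdet : IsUnit (rowMat (rowsMap U) (ca a)).det :=
          (Matrix.isUnit_iff_isUnit_det _).mp hunit
        have hXx : solX (rowsMap U) (ca a) (fun k => z (σ k.1)) = x := by
          have hcv : (fun j => rowsMap U (ca a j) ⬝ᵥ z (σ (ca a j).1))
              = (rowMat (rowsMap U) (ca a)) *ᵥ x := by
            funext j
            show rowsMap U (ca a j) ⬝ᵥ z (σ (ca a j).1) = rowsMap U (ca a j) ⬝ᵥ x
            have h3 := hrow (ca a j)
            rw [dotProduct_sub, sub_eq_zero] at h3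
            exact h3.symm
          show (rowMat (rowsMap U) (ca a))⁻¹ *ᵥ _ = x
          rw [hcv, Matrix.mulVec_mulVec, Matrix.nonsing_inv_mul _ hdet, Matrix.one_mulVec]
        by_contra hne
        refine hG3 σ a ⟨?_, ?_⟩
        · rw [hXx]
          exact hne
        · rw [hXx]
          exact hrow a
      exact ⟨σ a₀.1, (hxa a₀).symm⟩
    have hγrange : γ (Set.range z) = 1 :=
      le_antisymm prob_le_one (hTfull ▸ measure_mono hTsub)
    set cl : Fin n → ENNReal := fun l => γ {z l} with hcl
    have hrep : γ = ∑ l, cl l • Measure.dirac (z l) := by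
      ext s hs
      rw [Measure.finset_sum_apply]
      have hsplit : γ s = γ (s ∩ Set.range z) := by
        have h1 := measure_inter_add_diff (μ := γ) s hrange_meas
        have h2 : γ (s \ Set.range z) = 0 := by
          refine measure_mono_null (Set.diff_subset_compl _ _) ?_
          rw [measure_compl hrange_meas (measure_ne_top _ _), hγrange, measure_univ, tsub_self]
        rw [← h1, h2, add_zero]
      rw [hsplit]
      have hdecomp : s ∩ Set.range z = ⋃ l : Fin n, s ∩ {z l} := by
        ext y
        simp only [Set.mem_inter_iff, Set.mem_range, Set.mem_iUnion, Set.mem_singleton_iff]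
        constructor
        · rintro ⟨hy, l, rfl⟩
          exact ⟨l, hy, rfl⟩
        · rintro ⟨l, hy, rfl⟩
          exact ⟨hy, l, rfl⟩
      have hdisj : Pairwise (Function.onFun Disjoint fun l : Fin n => s ∩ {z l}) := by
        intro l m hlm
        refine Set.disjoint_of_subset Set.inter_subset_right Set.inter_subset_right ?_
        exact Set.disjoint_singleton.mpr (hz.ne hlm)
      rw [hdecomp, measure_iUnion hdisj fun l => hs.inter (measurableSet_singleton _)]
      rw [tsum_fintype]
      refine Finset.sum_congr rfl fun l _ => ?_
      rw [Measure.smul_apply, Measure.dirac_apply' _ hs]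
      by_cases hl : z l ∈ s
      · rw [Set.inter_eq_self_of_subset_right (Set.singleton_subset_iff.mpr hl),
          Set.indicator_of_mem hl, Pi.one_apply, smul_eq_mul, mul_one]
      · rw [Set.inter_singleton_eq_empty.mpr hl, Set.indicator_of_notMem hl, smul_zero,
          measure_empty]
    have hceq : ∀ m0 : Fin n, cl m0 = ENNReal.ofReal (b m0) := by
      intro m0
      set Pm := (Matrix.of (U a₀.1)).mulVec with hPm
      have hsingle : MeasurableSet (Pm ⁻¹' {Pm (z m0)}) :=
        (hPmeas a₀.1) (measurableSet_singleton _)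
      have hmem : ∀ l : Fin n, z l ∈ Pm ⁻¹' {Pm (z m0)} ↔ l = m0 := by
        intro l
        simp only [Set.mem_preimage, Set.mem_singleton_iff]
        constructor
        · intro h
          by_contra hlm
          apply hG2 a₀ l m0 hlm
          rw [dotProduct_sub, sub_eq_zero]
          exact congrFun h a₀.2
        · rintro rfl
          rfl
      have h1 : γ (Pm ⁻¹' {Pm (z m0)}) = γZ (Pm ⁻¹' {Pm (z m0)}) := by
        rw [← Measure.map_apply (hPmeas a₀.1) (measurableSet_singleton _),
          ← Measure.map_apply (hPmeas a₀.1) (measurableSet_singleton _), hmaps a₀.1]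
      have heval : ∀ ν : Fin n → ENNReal,
          (∑ l, ν l • Measure.dirac (z l)) (Pm ⁻¹' {Pm (z m0)}) = ν m0 := by
        intro ν
        rw [Measure.finset_sum_apply]
        have hterm : ∀ l : Fin n, (ν l • Measure.dirac (z l)) (Pm ⁻¹' {Pm (z m0)})
            = if l = m0 then ν l else 0 := by
          intro l
          rw [Measure.smul_apply, Measure.dirac_apply' _ hsingle]
          by_cases hl : l = m0
          · rw [if_pos hl, Set.indicator_of_mem ((hmem l).mpr hl), Pi.one_apply, smul_eq_mul,
              mul_one]
          · rw [if_neg hl, Set.indicator_of_notMem (fun hmm => hl ((hmem l).mp hmm)), smul_zero]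
        rw [Finset.sum_congr rfl fun l _ => hterm l, Finset.sum_ite_eq' Finset.univ m0 ν,
          if_pos (Finset.mem_univ _)]
      have hγv : γ (Pm ⁻¹' {Pm (z m0)}) = cl m0 := by
        conv_lhs => rw [hrep]
        exact heval cl
      have hZv : γZ (Pm ⁻¹' {Pm (z m0)}) = ENNReal.ofReal (b m0) := by
        conv_lhs => rw [hγZ]
        exact heval fun l => ENNReal.ofReal (b l)
      rw [← hγv, h1, hZv]
    rw [hrep, hγZ]
    exact Finset.sum_congr rfl fun l _ => by rw [hceq l]
  exact le_antisymm prob_le_one (by rw [← hGood1]; exact measure_mono hsub)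

end Main
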